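/- Let μ², λ, λ₁, λ₂, κ, v be real parameters with v > 0, κv² − 2μ² > 0, 10λ₁ + λ₂ ≠ 0, and (40μ² − 10κv²)/(10λ₁ + λ₂) ≥ 0. Set m := √(κv² − 2μ²) and let A ∈ ℝ satisfy A² = (40μ² − 10κv²)/(10λ₁ + λ₂). If the parameters satisfy the condition (4μ² − 2κv² + λv²)(20λ₁ + 2λ₂) − 5κ(4μ² − κv²) = 0, then the functions φ(y) = v·tanh(my) and χ(y) = A·sech(my) satisfy, for all y ∈ ℝ, the coupled system of ordinary differential equations φ''(y) = (κ/4)χ(y)²φ(y) + λφ(y)(φ(y)² − v²) and χ''(y) = (−2μ² + κφ(y)²)χ(y) + (λ₁ + λ₂/10)χ(y)³, together with the boundary behaviour φ(y) → ±v and χ(y) → 0 as y → ±∞. -/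

import Mathlib

lemma tendsto_tanh_atTop' : Filter.Tendsto Real.tanh Filter.atTop (nhds 1) := by
  have heq : ∀ x : ℝ, Real.tanh x = (1 - Real.exp (-(2*x)))/(1 + Real.exp (-(2*x))) := by
    intro x
    rw [Real.tanh_eq_sinh_div_cosh, Real.sinh_eq, Real.cosh_eq]
    have h1 : Real.exp (-(2*x)) = Real.exp (-x) / Real.exp x := by
      rw [← Real.exp_sub]; ring_nf
    rw [h1]
    have hx := (Real.exp_pos x).ne'
    have hx2 := (Real.exp_pos (-x)).ne'
    have hx3 : Real.exp x + Real.exp (-x) ≠ 0 := by positivity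
    field_simp
  have he : Filter.Tendsto (fun x : ℝ => Real.exp (-(2*x))) Filter.atTop (nhds 0) := by
    apply Real.tendsto_exp_atBot.comp
    exact (Filter.tendsto_neg_atBot_iff.mpr (Filter.tendsto_id.const_mul_atTop (by norm_num)))
  have hone : Filter.Tendsto (fun _ : ℝ => (1:ℝ)) Filter.atTop (nhds 1) := tendsto_const_nhds
  have h2 := ((hone.sub he).div (hone.add he) (by norm_num : (1:ℝ) + 0 ≠ 0))
  simp only [sub_zero, add_zero, div_one] at h2
  exact (funext heq : Real.tanh = _) ▸ h2

lemma tendsto_cosh_atTop' : Filter.Tendsto Real.cosh Filter.atTop Filter.atTop := by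
  apply Filter.tendsto_atTop_mono (fun x => ?_)
    (Filter.Tendsto.atTop_div_const (by norm_num : (0:ℝ)<2) Real.tendsto_exp_atTop)
  rw [Real.cosh_eq]
  have := (Real.exp_pos (-x)).le
  linarith

lemma hd_phi (v m : ℝ) (y : ℝ) :
    HasDerivAt (fun y => v * Real.tanh (m*y)) (v*m/Real.cosh (m*y)^2) y := by
  have hc : Real.cosh (m*y) ≠ 0 := (Real.cosh_pos (m*y)).ne'
  have hmy : HasDerivAt (fun y : ℝ => m*y) m y := by
    simpa using (hasDerivAt_id y).const_mul m
  have hS : HasDerivAt (fun y : ℝ => Real.sinh (m*y)) (Real.cosh (m*y) * m) y :=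
    (Real.hasDerivAt_sinh (m*y)).comp y hmy
  have hC : HasDerivAt (fun y : ℝ => Real.cosh (m*y)) (Real.sinh (m*y) * m) y :=
    (Real.hasDerivAt_cosh (m*y)).comp y hmy
  have hT := (hS.div hC hc).const_mul v
  have hre : (fun y => v * Real.tanh (m*y)) = fun y => v * (Real.sinh (m*y) / Real.cosh (m*y)) := by
    funext x; rw [Real.tanh_eq_sinh_div_cosh]
  rw [hre]
  refine hT.congr_deriv ?_
  have hsc := Real.cosh_sq_sub_sinh_sq (m*y)
  have h2 : Real.cosh (m*y)*m*Real.cosh (m*y) - Real.sinh (m*y)*(Real.sinh (m*y)*m) = m := by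
    linear_combination m*hsc
  rw [h2]; ring

lemma hd_phi2 (v m : ℝ) (y : ℝ) :
    HasDerivAt (fun y => v*m/Real.cosh (m*y)^2)
      (-2*v*m^2*Real.sinh (m*y)/Real.cosh (m*y)^3) y := by
  have hc : Real.cosh (m*y) ≠ 0 := (Real.cosh_pos (m*y)).ne'
  have hmy : HasDerivAt (fun y : ℝ => m*y) m y := by
    simpa using (hasDerivAt_id y).const_mul m
  have hC : HasDerivAt (fun y : ℝ => Real.cosh (m*y)) (Real.sinh (m*y) * m) y :=
    (Real.hasDerivAt_cosh (m*y)).comp y hmy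
  have hC2 := hC.pow 2
  have h := (hasDerivAt_const y (v*m)).div hC2 (pow_ne_zero 2 hc)
  refine h.congr_deriv ?_
  simp only [Pi.pow_apply]
  field_simp
  ring

lemma hd_chi (A m : ℝ) (y : ℝ) :
    HasDerivAt (fun y => A / Real.cosh (m*y)) (-(A*m)*Real.sinh (m*y)/Real.cosh (m*y)^2) y := by
  have hc : Real.cosh (m*y) ≠ 0 := (Real.cosh_pos (m*y)).ne'
  have hmy : HasDerivAt (fun y : ℝ => m*y) m y := by
    simpa using (hasDerivAt_id y).const_mul m
  have hC : HasDerivAt (fun y : ℝ => Real.cosh (m*y)) (Real.sinh (m*y) * m) y :=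
    (Real.hasDerivAt_cosh (m*y)).comp y hmy
  have h := (hasDerivAt_const y A).div hC hc
  refine h.congr_deriv ?_
  field_simp
  ring

lemma hd_chi2 (A m : ℝ) (y : ℝ) :
    HasDerivAt (fun y => -(A*m)*Real.sinh (m*y)/Real.cosh (m*y)^2)
      (-(A*m^2)*(Real.cosh (m*y)^2 - 2*Real.sinh (m*y)^2)/Real.cosh (m*y)^3) y := by
  have hc : Real.cosh (m*y) ≠ 0 := (Real.cosh_pos (m*y)).ne'
  have hmy : HasDerivAt (fun y : ℝ => m*y) m y := by
    simpa using (hasDerivAt_id y).const_mul m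
  have hS : HasDerivAt (fun y : ℝ => Real.sinh (m*y)) (Real.cosh (m*y) * m) y :=
    (Real.hasDerivAt_sinh (m*y)).comp y hmy
  have hC : HasDerivAt (fun y : ℝ => Real.cosh (m*y)) (Real.sinh (m*y) * m) y :=
    (Real.hasDerivAt_cosh (m*y)).comp y hmy
  have h := (hS.const_mul (-(A*m))).div (hC.pow 2) (pow_ne_zero 2 hc)
  refine h.congr_deriv ?_
  simp only [Pi.pow_apply]
  field_simp
  ring

/-- The quartic-potential domain-wall background of the SO(10) → SU(5)×U(1)_X model:
`φ(y) = v·tanh(my)`, `χ(y) = A·sech(my)` solve the static Euler–Lagrange equations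
and have the required boundary behaviour. -/
theorem quartic_domain_wall_solution
    (μ2 lam l1 l2 κ v : ℝ)
    (hv : 0 < v)
    (hmass : 0 < κ * v ^ 2 - 2 * μ2)
    (hden : 10 * l1 + l2 ≠ 0)
    (hA2nonneg : (40 * μ2 - 10 * κ * v ^ 2) / (10 * l1 + l2) ≥ 0)
    (m A : ℝ)
    (hm : m = Real.sqrt (κ * v ^ 2 - 2 * μ2))
    (hA : A ^ 2 = (40 * μ2 - 10 * κ * v ^ 2) / (10 * l1 + l2))
    (hcond : (4 * μ2 - 2 * κ * v ^ 2 + lam * v ^ 2) * (20 * l1 + 2 * l2)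
      - 5 * κ * (4 * μ2 - κ * v ^ 2) = 0)
    (φ χ : ℝ → ℝ)
    (hφ : ∀ y, φ y = v * Real.tanh (m * y))
    (hχ : ∀ y, χ y = A / Real.cosh (m * y)) :
    (∀ y : ℝ,
      deriv (deriv φ) y = (κ / 4) * (χ y) ^ 2 * φ y + lam * φ y * ((φ y) ^ 2 - v ^ 2) ∧
      deriv (deriv χ) y = (-2 * μ2 + κ * (φ y) ^ 2) * χ y + (l1 + l2 / 10) * (χ y) ^ 3) ∧
    Filter.Tendsto φ Filter.atTop (nhds v) ∧
    Filter.Tendsto φ Filter.atBot (nhds (-v)) ∧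
    Filter.Tendsto χ Filter.atTop (nhds 0) ∧
    Filter.Tendsto χ Filter.atBot (nhds 0) := by
  have hφf : φ = fun y => v * Real.tanh (m * y) := funext hφ
  have hχf : χ = fun y => A / Real.cosh (m * y) := funext hχ
  subst hφf hχf
  have hm2 : m ^ 2 = κ * v ^ 2 - 2 * μ2 := by rw [hm]; exact Real.sq_sqrt hmass.le
  have hm0 : 0 < m := hm ▸ Real.sqrt_pos.mpr hmass
  have hA' : A ^ 2 * (10 * l1 + l2) = 40 * μ2 - 10 * κ * v ^ 2 := by
    rw [hA]; field_simp
  have key1 : κ / 4 * A ^ 2 - lam * v ^ 2 = -(2 * m ^ 2) := by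
    have h0 : (κ / 4 * A ^ 2 - lam * v ^ 2 + 2 * m ^ 2) * (10 * l1 + l2) = 0 := by
      linear_combination (κ / 4) * hA' - (1 / 2) * hcond + 2 * (10 * l1 + l2) * hm2
    rcases mul_eq_zero.mp h0 with h | h
    · linarith
    · exact absurd h hden
  have key2 : (l1 + l2 / 10) * A ^ 2 = 4 * μ2 - κ * v ^ 2 := by
    linear_combination (1 / 10) * hA'
  have dφ : deriv (fun y => v * Real.tanh (m * y)) = fun y => v * m / Real.cosh (m * y) ^ 2 :=
    funext fun y => (hd_phi v m y).deriv
  have dχ : deriv (fun y => A / Real.cosh (m * y))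
      = fun y => -(A * m) * Real.sinh (m * y) / Real.cosh (m * y) ^ 2 :=
    funext fun y => (hd_chi A m y).deriv
  have hmy : Filter.Tendsto (fun y : ℝ => m * y) Filter.atTop Filter.atTop :=
    Filter.Tendsto.const_mul_atTop hm0 Filter.tendsto_id
  have hmyb : Filter.Tendsto (fun y : ℝ => m * y) Filter.atBot Filter.atBot :=
    Filter.Tendsto.const_mul_atBot hm0 Filter.tendsto_id
  refine ⟨fun y => ⟨?_, ?_⟩, ?_, ?_, ?_, ?_⟩
  · rw [dφ, (hd_phi2 v m y).deriv]
    simp only [Real.tanh_eq_sinh_div_cosh]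
    have hc : Real.cosh (m * y) ≠ 0 := (Real.cosh_pos (m * y)).ne'
    have hsc := Real.cosh_sq_sub_sinh_sq (m * y)
    field_simp
    linear_combination (-4*Real.sinh (m*y))*key1
      + 4*lam*v^2*Real.sinh (m*y)*hsc
  · rw [dχ, (hd_chi2 A m y).deriv]
    simp only [Real.tanh_eq_sinh_div_cosh]
    have hc : Real.cosh (m * y) ≠ 0 := (Real.cosh_pos (m * y)).ne'
    have hsc := Real.cosh_sq_sub_sinh_sq (m * y)
    have hR : (-2 * μ2 + κ * (v * (Real.sinh (m*y) / Real.cosh (m*y))) ^ 2) * (A / Real.cosh (m*y))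
        + (l1 + l2 / 10) * (A / Real.cosh (m*y)) ^ 3
        = ((-2 * μ2 * Real.cosh (m*y) ^ 2 + κ * v ^ 2 * Real.sinh (m*y) ^ 2) * A
            + (l1 + l2 / 10) * A ^ 3) / Real.cosh (m*y) ^ 3 := by
      field_simp
    rw [hR]
    congr 1
    linear_combination (-(A) * (Real.cosh (m*y) ^ 2 - 2 * Real.sinh (m*y) ^ 2)) * hm2
      - A * key2 - (A * (κ * v ^ 2 - 4 * μ2)) * hsc
  · have := (tendsto_tanh_atTop'.comp hmy).const_mul v
    simpa using this
  · have htb : Filter.Tendsto Real.tanh Filter.atBot (nhds (-1)) := by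
      have h := (tendsto_tanh_atTop'.comp Filter.tendsto_neg_atBot_atTop).neg
      have he : (fun x : ℝ => -(Real.tanh ∘ Neg.neg) x) = Real.tanh := by
        funext x; simp [Function.comp, Real.tanh_neg]
      rwa [he] at h
    have := (htb.comp hmyb).const_mul v
    simpa using this
  · exact Filter.Tendsto.div_atTop tendsto_const_nhds (tendsto_cosh_atTop'.comp hmy)
  · have hcb : Filter.Tendsto Real.cosh Filter.atBot Filter.atTop := by
      have h := tendsto_cosh_atTop'.comp Filter.tendsto_neg_atBot_atTop
      have he : Real.cosh ∘ (Neg.neg : ℝ → ℝ) = Real.cosh := by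
        funext x; exact Real.cosh_neg x
      rwa [he] at h
    exact Filter.Tendsto.div_atTop tendsto_const_nhds (hcb.comp hmyb)
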